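/- The only positive real solution (a₁, a₃, a₄) of the system: (a₁ + a₃ + a₄)·a₄ = 1, 2a₁² + a₃² + a₄² = 1, and (2a₁ + a₃ - a₄)²(1 + a₁a₃) = 8a₁²a₃(a₁ + a₃), is a₁ = 1/√10, a₃ = a₄ = 2/√10. -/

import Mathlib

open Real

/-- The only positive solution of the system
`(a₁+a₃+a₄)a₄ = 1`, `2a₁² + a₃² + a₄² = 1`, `(2a₁+a₃-a₄)²(1+a₁a₃) = 8a₁²a₃(a₁+a₃)`
is `a₁ = 1/√10`, `a₃ = a₄ = 2/√10`. -/
theorem four_dim_system_one (a₁ a₃ a₄ : ℝ) (h₁ : 0 < a₁) (h₃ : 0 < a₃) (h₄ : 0 < a₄)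
    (e₁ : (a₁ + a₃ + a₄) * a₄ = 1)
    (e₂ : 2 * a₁ ^ 2 + a₃ ^ 2 + a₄ ^ 2 = 1)
    (e₃ : (2 * a₁ + a₃ - a₄) ^ 2 * (1 + a₁ * a₃) = 8 * a₁ ^ 2 * a₃ * (a₁ + a₃)) :
    a₁ = 1 / Real.sqrt 10 ∧ a₃ = 2 / Real.sqrt 10 ∧ a₄ = 2 / Real.sqrt 10 := by
  have hA : a₄ * (a₁ + a₃) = 2 * a₁ ^ 2 + a₃ ^ 2 := by linear_combination e₁ - e₂
  have hkey : (2 * a₁ + a₃ - a₄) * (a₁ + a₃) = 3 * a₁ * a₃ := by linear_combination -hA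
  have hC : 9 * a₃ * (1 + a₁ * a₃) = 8 * (a₁ + a₃) ^ 3 := by
    have h9 : a₁ ^ 2 * a₃ * (9 * a₃ * (1 + a₁ * a₃) - 8 * (a₁ + a₃) ^ 3) = 0 := by
      linear_combination (a₁ + a₃) ^ 2 * e₃
        - (1 + a₁ * a₃) * ((2 * a₁ + a₃ - a₄) * (a₁ + a₃) + 3 * a₁ * a₃) * hkey
    have hpos : (0:ℝ) < a₁ ^ 2 * a₃ := by positivity
    have := (mul_eq_zero.mp h9).resolve_left (ne_of_gt hpos)
    linarith
  have hB : (2 * a₁ ^ 2 + a₃ ^ 2) * ((a₁ + a₃) ^ 2 + (2 * a₁ ^ 2 + a₃ ^ 2))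
      = (a₁ + a₃) ^ 2 := by
    linear_combination (a₁ + a₃) ^ 2 * e₂ - (a₄ * (a₁ + a₃) + 2 * a₁ ^ 2 + a₃ ^ 2) * hA
  -- resultant eliminating a₃
  have hRx : a₁ ^ 2 * (10 * a₁ ^ 2 - 1)
      * (170 * a₁ ^ 8 - 737 * a₁ ^ 6 + 1077 * a₁ ^ 4 - 419 * a₁ ^ 2 + 50) = 0 := by
    linear_combination
      ((50:ℝ) + (-6371/9) * a₁^2 + (20281/9) * a₁^4 + (-4559/3) * a₁^6 + (430) * a₁^8
        + (-250/3) * a₁ * a₃ + (6293/9) * a₁^3 * a₃ + (-2365/3) * a₁^5 * a₃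
        + (4100/9) * a₁^7 * a₃ + (-400/9) * a₃^2 + (4312/9) * a₁^2 * a₃^2
        + (-2776/3) * a₁^4 * a₃^2 + (3680/9) * a₁^6 * a₃^2) * hB +
      ((100/9 : ℝ) * a₁ + (-1388/9) * a₁^3 + (1325/3) * a₁^5 + (-251) * a₁^7 + (110) * a₁^9
        + (50/9) * a₃ + (-323/3) * a₁^2 * a₃ + (4700/9) * a₁^4 * a₃ + (-5749/9) * a₁^6 * a₃
        + (680/3) * a₁^8 * a₃ + (-100/9) * a₁ * a₃^2 + (70) * a₁^3 * a₃^2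
        + (16/3) * a₁^5 * a₃^2 + (220/9) * a₁^7 * a₃^2 + (-100/9) * a₃^3
        + (1078/9) * a₁^2 * a₃^3 + (-694/3) * a₁^4 * a₃^3 + (920/9) * a₁^6 * a₃^3) * hC
  -- resultant eliminating a₁
  have hRy : a₃ * (5 * a₃ ^ 2 - 2)
      * (170 * a₃ ^ 8 + 1117 * a₃ ^ 6 + 2367 * a₃ ^ 4 + 205 * a₃ ^ 2 + 8) = 0 := by
    linear_combination
      ((992/9 : ℝ) * a₃ + (3040) * a₃^3 + (50752/9) * a₃^5 + (15625/9) * a₃^7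
        + (128/9) * a₁ + (4160/3) * a₃^2 * a₁ + (87752/9) * a₃^4 * a₁ + (18280/9) * a₃^6 * a₁
        + (832/3) * a₃ * a₁^2 + (28096/9) * a₃^3 * a₁^2 + (1640/3) * a₃^5 * a₁^2) * hB +
      ((-16/9 : ℝ) + (-274/9) * a₃^2 + (-1133/9) * a₃^4 + (8153/9) * a₃^6 + (2950/9) * a₃^8
        + (208/9) * a₃ * a₁ + (6946/9) * a₃^3 * a₁ + (1829) * a₃^5 * a₁ + (2945/9) * a₃^7 * a₁
        + (32/3) * a₁^2 + (1664/3) * a₃^2 * a₁^2 + (16646/9) * a₃^4 * a₁^2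
        + (1700/3) * a₃^6 * a₁^2 + (208) * a₃ * a₁^3 + (7024/3) * a₃^3 * a₁^3
        + (410) * a₃^5 * a₁^3) * hC
  have hx2 : 2 * a₁ ^ 2 < 1 := by nlinarith [sq_nonneg a₃, sq_nonneg a₄]
  have hq : (0:ℝ) < 170 * a₁ ^ 8 - 737 * a₁ ^ 6 + 1077 * a₁ ^ 4 - 419 * a₁ ^ 2 + 50 := by
    nlinarith [sq_nonneg (a₁ ^ 2 - 1/4), sq_nonneg (a₁ ^ 2 - 1/2), sq_nonneg a₁,
      mul_pos (mul_pos h₁ h₁) (mul_pos h₁ h₁), sq_nonneg (a₁ ^ 4 - a₁ ^ 2 / 4)]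
  have ha1sq : a₁ ^ 2 = 1 / 10 := by
    rcases mul_eq_zero.mp hRx with h | h
    · rcases mul_eq_zero.mp h with h' | h'
      · nlinarith [sq_nonneg a₁]
      · linarith
    · linarith
  have hqy : (0:ℝ) < 170 * a₃ ^ 8 + 1117 * a₃ ^ 6 + 2367 * a₃ ^ 4 + 205 * a₃ ^ 2 + 8 := by
    positivity
  have ha3sq : a₃ ^ 2 = 2 / 5 := by
    rcases mul_eq_zero.mp hRy with h | h
    · rcases mul_eq_zero.mp h with h' | h'
      · linarith
      · linarith
    · linarith
  clear hRx hRy hB hC hq hqy hkey hx2 e₁ e₂ e₃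
  have hs : Real.sqrt 10 ^ 2 = 10 := Real.sq_sqrt (by norm_num)
  have hs0 : (0:ℝ) < Real.sqrt 10 := Real.sqrt_pos.mpr (by norm_num)
  have ha1 : a₁ = 1 / Real.sqrt 10 := by
    have h1 : (a₁ * Real.sqrt 10) ^ 2 = 1 := by
      rw [mul_pow, ha1sq, hs]; norm_num
    have h2 : a₁ * Real.sqrt 10 = 1 := by
      nlinarith [mul_pos h₁ hs0]
    field_simp
    linarith [h2]
  have ha3 : a₃ = 2 / Real.sqrt 10 := by
    have h1 : (a₃ * Real.sqrt 10) ^ 2 = 4 := by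
      rw [mul_pow, ha3sq, hs]; norm_num
    have h2 : a₃ * Real.sqrt 10 = 2 := by
      nlinarith [mul_pos h₃ hs0]
    field_simp
    linarith [h2]
  have ha4 : a₄ = 2 / Real.sqrt 10 := by
    rw [ha1, ha3] at hA
    have h10 : Real.sqrt 10 * Real.sqrt 10 = 10 := Real.mul_self_sqrt (by norm_num)
    rw [eq_div_iff (ne_of_gt hs0)]
    field_simp at hA
    linear_combination hA
  exact ⟨ha1, ha3, ha4⟩
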